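/- For λ_n = (−1)^n ε [n + μ + 1/2]_q with ε = ±1, μ > 0, and 0 < q < 1, the quantity λ_k² + (q+q^{−1}) λ_k λ_n + λ_n² − 1 vanishes only if k = n or k = n ± 1. -/

import Mathlib

/-- The q-number `[x]_q = (q^x - q^{-x})/(q - q^{-1})`. -/
noncomputable def qnum (q x : ℝ) : ℝ := (q ^ x - q ^ (-x)) / (q - q⁻¹)

lemma qnum_alt (q x : ℝ) : qnum q x = (q ^ (-x) - q ^ x) / (q⁻¹ - q) := by
  rw [qnum, ← neg_div_neg_eq]; ring_nf

lemma qden_pos {q : ℝ} (hq0 : 0 < q) (hq1 : q < 1) : 0 < q⁻¹ - q := by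
  have : 1 < q⁻¹ := (one_lt_inv_iff₀).mpr ⟨hq0, hq1⟩
  linarith

lemma qnum_pos {q : ℝ} (hq0 : 0 < q) (hq1 : q < 1) {x : ℝ} (hx : 0 < x) :
    0 < qnum q x := by
  rw [qnum_alt]
  apply div_pos _ (qden_pos hq0 hq1)
  have : q ^ x < q ^ (-x) := Real.rpow_lt_rpow_of_exponent_gt hq0 hq1 (by linarith)
  linarith

lemma qnum_mono {q : ℝ} (hq0 : 0 < q) (hq1 : q < 1) {x y : ℝ} (hxy : x < y) :
    qnum q x < qnum q y := by
  rw [qnum_alt, qnum_alt]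
  apply div_lt_div_of_pos_right _ (qden_pos hq0 hq1)
  have h1 : q ^ (-x) < q ^ (-y) := Real.rpow_lt_rpow_of_exponent_gt hq0 hq1 (by linarith)
  have h2 : q ^ y < q ^ x := Real.rpow_lt_rpow_of_exponent_gt hq0 hq1 hxy
  linarith

lemma qhalf_sq {q : ℝ} (hq0 : 0 < q) (hq1 : q < 1) :
    (2 + (q + q⁻¹)) * qnum q (1/2) ^ 2 = 1 := by
  set w : ℝ := q ^ ((1:ℝ)/2) with hw
  have hwpos : 0 < w := Real.rpow_pos_of_pos hq0 _
  have hq : q = w * w := by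
    rw [hw, ← Real.rpow_add hq0]; norm_num
  have hneg : q ^ (-(1/2:ℝ)) = w⁻¹ := by
    rw [Real.rpow_neg hq0.le]
  have hs : q - q⁻¹ ≠ 0 := by
    have := qden_pos hq0 hq1; linarith
  rw [qnum, hneg, ← hw]
  rw [hq] at hs ⊢
  rw [div_pow, ← mul_div_assoc, div_eq_one_iff_eq (pow_ne_zero 2 hs)]
  field_simp
  ring

lemma plus_pos {q : ℝ} (hq0 : 0 < q) (hq1 : q < 1) {x y : ℝ}
    (hx : 1/2 < x) (hy : 1/2 < y) :
    0 < qnum q x ^ 2 + (q + q⁻¹) * (qnum q x * qnum q y) + qnum q y ^ 2 - 1 := by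
  have hc : 0 < qnum q (1/2) := qnum_pos hq0 hq1 (by norm_num)
  have h1 : qnum q (1/2) < qnum q x := qnum_mono hq0 hq1 hx
  have h2 : qnum q (1/2) < qnum q y := qnum_mono hq0 hq1 hy
  have hQ : 0 < q + q⁻¹ := by positivity
  have key := qhalf_sq hq0 hq1
  nlinarith [mul_pos hc hc, mul_lt_mul'' h1 h2 hc.le hc.le,
    mul_lt_mul_of_pos_left (mul_lt_mul'' h1 h2 hc.le hc.le) hQ]

lemma frac_lemma (a b s Q : ℝ) (hs : s ≠ 0) :
    (a/s)^2 - Q * ((a/s) * (b/s)) + (b/s)^2 - 1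
      = (a^2 - Q * (a*b) + b^2 - s^2) / s^2 := by
  field_simp

lemma numer_id (w X Y : ℝ) (hw : w ≠ 0) (hX : X ≠ 0) (hY : Y ≠ 0) :
    (X*Y - (X*Y)⁻¹)^2 - (w*w + (w*w)⁻¹) * ((X*Y - (X*Y)⁻¹) * (X/Y - (X/Y)⁻¹))
      + (X/Y - (X/Y)⁻¹)^2 - (w*w - (w*w)⁻¹)^2
    = (Y*w - (Y*w)⁻¹) * (Y/w - (Y/w)⁻¹) * (X^2 + (X^2)⁻¹ + w*w + (w*w)⁻¹) := by
  field_simp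
  ring

lemma key_ineq (w X Y : ℝ) (hw : 0 < w) (hX : 0 < X) (hY : 0 < Y) (hw1 : w < 1)
    (hYw : Y * w < 1) (hYdw : Y / w < 1) :
    0 < ((X*Y - (X*Y)⁻¹)/(w*w - (w*w)⁻¹))^2
      - (w*w + (w*w)⁻¹) * (((X*Y - (X*Y)⁻¹)/(w*w - (w*w)⁻¹)) * ((X/Y - (X/Y)⁻¹)/(w*w - (w*w)⁻¹)))
      + ((X/Y - (X/Y)⁻¹)/(w*w - (w*w)⁻¹))^2 - 1 := by
  have hww : w * w < 1 := by nlinarith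
  have hwwinv : 1 < (w*w)⁻¹ := (one_lt_inv_iff₀).mpr ⟨by positivity, hww⟩
  have hs : w*w - (w*w)⁻¹ < 0 := by linarith
  have h1 : Y*w - (Y*w)⁻¹ < 0 := by
    have : 1 < (Y*w)⁻¹ := (one_lt_inv_iff₀).mpr ⟨by positivity, hYw⟩
    linarith
  have h2 : Y/w - (Y/w)⁻¹ < 0 := by
    have : 1 < (Y/w)⁻¹ := (one_lt_inv_iff₀).mpr ⟨by positivity, hYdw⟩
    linarith
  have h3 : (0:ℝ) < X^2 + (X^2)⁻¹ + w*w + (w*w)⁻¹ := by positivity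
  rw [frac_lemma _ _ _ _ hs.ne, numer_id w X Y hw.ne' hX.ne' hY.ne']
  exact div_pos (mul_pos (mul_pos_of_neg_of_neg h1 h2) h3) (pow_two_pos_of_ne_zero hs.ne)

lemma minus_pos {q : ℝ} (hq0 : 0 < q) (hq1 : q < 1) {b r : ℝ}
    (hb : 0 < b) (hr : 3 ≤ r) :
    0 < qnum q (b+r) ^ 2 - (q + q⁻¹) * (qnum q (b+r) * qnum q b) + qnum q b ^ 2 - 1 := by
  set w : ℝ := q ^ ((1:ℝ)/2) with hwdef
  set X : ℝ := q ^ (b + r/2) with hXdef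
  set Y : ℝ := q ^ (r/2) with hYdef
  have hwpos : 0 < w := Real.rpow_pos_of_pos hq0 _
  have hXpos : 0 < X := Real.rpow_pos_of_pos hq0 _
  have hYpos : 0 < Y := Real.rpow_pos_of_pos hq0 _
  have hw1 : w < 1 := Real.rpow_lt_one hq0.le hq1 (by norm_num)
  have hq : q = w * w := by
    rw [hwdef, ← Real.rpow_add hq0]; norm_num
  have hA : q ^ (b+r) = X * Y := by
    rw [hXdef, hYdef, ← Real.rpow_add hq0]; ring_nf
  have hAinv : q ^ (-(b+r)) = (X*Y)⁻¹ := by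
    rw [Real.rpow_neg hq0.le, hA]
  have hB : q ^ b = X / Y := by
    rw [hXdef, hYdef, ← Real.rpow_sub hq0]; ring_nf
  have hBinv : q ^ (-b) = (X/Y)⁻¹ := by
    rw [Real.rpow_neg hq0.le, hB]
  have hYw : Y * w < 1 := by
    rw [hYdef, hwdef, ← Real.rpow_add hq0]
    exact Real.rpow_lt_one hq0.le hq1 (by linarith)
  have hYdw : Y / w < 1 := by
    rw [hYdef, hwdef, ← Real.rpow_sub hq0]
    exact Real.rpow_lt_one hq0.le hq1 (by linarith)
  have goal_eq : qnum q (b+r) ^ 2 - (q + q⁻¹) * (qnum q (b+r) * qnum q b) + qnum q b ^ 2 - 1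
      = ((X*Y - (X*Y)⁻¹)/(w*w - (w*w)⁻¹))^2
      - (w*w + (w*w)⁻¹) * (((X*Y - (X*Y)⁻¹)/(w*w - (w*w)⁻¹)) * ((X/Y - (X/Y)⁻¹)/(w*w - (w*w)⁻¹)))
      + ((X/Y - (X/Y)⁻¹)/(w*w - (w*w)⁻¹))^2 - 1 := by
    rw [qnum, qnum, hA, hAinv, hB, hBinv, ← hq]
  rw [goal_eq]
  exact key_ineq w X Y hwpos hXpos hYpos hw1 hYw hYdw

theorem stmt_10 (q μ ε : ℝ) (hq0 : 0 < q) (hq1 : q < 1) (hμ : 0 < μ)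
    (hε : ε = 1 ∨ ε = -1)
    (lam : ℕ → ℝ)
    (hlam : ∀ n : ℕ, lam n = (-1) ^ (n + 1) * ε * qnum q ((n : ℝ) + μ + 1 / 2)) :
    ∀ k n : ℕ,
      lam k ^ 2 + (q + q⁻¹) * lam k * lam n + lam n ^ 2 - 1 = 0 →
      k = n ∨ k = n + 1 ∨ n = k + 1 := by
  intro k n hEq
  by_cases hkn : k = n
  · exact Or.inl hkn
  have hε2 : ε * ε = 1 := by rcases hε with h | h <;> rw [h] <;> norm_num
  have hsq : ∀ m : ℕ, lam m ^ 2 = qnum q ((m : ℝ) + μ + 1/2) ^ 2 := by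
    intro m
    have h1 : ((-1:ℝ) ^ (m+1)) ^ 2 = 1 := by
      rw [← pow_mul, mul_comm, pow_mul]; norm_num
    have : lam m ^ 2 = ((-1:ℝ) ^ (m+1)) ^ 2 * (ε * ε) * qnum q ((m : ℝ) + μ + 1/2) ^ 2 := by
      rw [hlam m]; ring
    rw [this, h1, hε2, one_mul, one_mul]
  have hprod : lam k * lam n
      = (-1:ℝ) ^ (k+n) * (qnum q ((k : ℝ) + μ + 1/2) * qnum q ((n : ℝ) + μ + 1/2)) := by
    have h1 : ((-1:ℝ) ^ (k+1)) * ((-1:ℝ) ^ (n+1)) = (-1:ℝ) ^ (k+n) := by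
      rw [← pow_add]
      have : k+1+(n+1) = (k+n)+2 := by ring
      rw [this, pow_add]; norm_num
    calc lam k * lam n
        = (((-1:ℝ) ^ (k+1)) * ((-1:ℝ) ^ (n+1))) * (ε * ε)
          * (qnum q ((k : ℝ) + μ + 1/2) * qnum q ((n : ℝ) + μ + 1/2)) := by
          rw [hlam k, hlam n]; ring
      _ = (-1:ℝ) ^ (k+n) * (qnum q ((k : ℝ) + μ + 1/2) * qnum q ((n : ℝ) + μ + 1/2)) := by
          rw [h1, hε2, mul_one]
  have hkc : (0:ℝ) ≤ (k:ℝ) := Nat.cast_nonneg k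
  have hnc : (0:ℝ) ≤ (n:ℝ) := Nat.cast_nonneg n
  rcases Nat.even_or_odd (k+n) with he | ho
  · -- even: contradiction
    exfalso
    have hsign : (-1:ℝ) ^ (k+n) = 1 := Even.neg_one_pow he
    have hEq' : qnum q ((k : ℝ) + μ + 1/2) ^ 2
        + (q + q⁻¹) * (qnum q ((k : ℝ) + μ + 1/2) * qnum q ((n : ℝ) + μ + 1/2))
        + qnum q ((n : ℝ) + μ + 1/2) ^ 2 - 1 = 0 := by
      linear_combination hEq - hsq k - hsq n - (q+q⁻¹) * hprod
        - (q+q⁻¹) * (qnum q ((k : ℝ) + μ + 1/2) * qnum q ((n : ℝ) + μ + 1/2)) * hsign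
    have hp := plus_pos hq0 hq1 (x := (k:ℝ) + μ + 1/2) (y := (n:ℝ) + μ + 1/2)
      (by linarith) (by linarith)
    linarith
  · have hsign : (-1:ℝ) ^ (k+n) = -1 := Odd.neg_one_pow ho
    obtain ⟨m, hm⟩ := ho
    rcases lt_or_gt_of_ne hkn with hlt | hgt
    · -- k < n
      by_cases hn1 : n = k + 1
      · exact Or.inr (Or.inr hn1)
      exfalso
      have h3 : k + 3 ≤ n := by omega
      have h3r : (k:ℝ) + 3 ≤ (n:ℝ) := by exact_mod_cast h3
      have hmp := minus_pos hq0 hq1 (b := (k:ℝ) + μ + 1/2) (r := (n:ℝ) - (k:ℝ))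
        (by linarith) (by linarith)
      have harg : ((k:ℝ) + μ + 1/2) + ((n:ℝ) - (k:ℝ)) = (n:ℝ) + μ + 1/2 := by ring
      rw [harg] at hmp
      have hEq' : qnum q ((n : ℝ) + μ + 1/2) ^ 2
          - (q + q⁻¹) * (qnum q ((n : ℝ) + μ + 1/2) * qnum q ((k : ℝ) + μ + 1/2))
          + qnum q ((k : ℝ) + μ + 1/2) ^ 2 - 1 = 0 := by
        linear_combination hEq - hsq k - hsq n - (q+q⁻¹) * hprod
          - (q+q⁻¹) * (qnum q ((k : ℝ) + μ + 1/2) * qnum q ((n : ℝ) + μ + 1/2)) * hsign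
      linarith
    · -- n < k
      by_cases hk1 : k = n + 1
      · exact Or.inr (Or.inl hk1)
      exfalso
      have h3 : n + 3 ≤ k := by omega
      have h3r : (n:ℝ) + 3 ≤ (k:ℝ) := by exact_mod_cast h3
      have hmp := minus_pos hq0 hq1 (b := (n:ℝ) + μ + 1/2) (r := (k:ℝ) - (n:ℝ))
        (by linarith) (by linarith)
      have harg : ((n:ℝ) + μ + 1/2) + ((k:ℝ) - (n:ℝ)) = (k:ℝ) + μ + 1/2 := by ring
      rw [harg] at hmp
      have hEq' : qnum q ((k : ℝ) + μ + 1/2) ^ 2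
          - (q + q⁻¹) * (qnum q ((k : ℝ) + μ + 1/2) * qnum q ((n : ℝ) + μ + 1/2))
          + qnum q ((n : ℝ) + μ + 1/2) ^ 2 - 1 = 0 := by
        linear_combination hEq - hsq k - hsq n - (q+q⁻¹) * hprod
          - (q+q⁻¹) * (qnum q ((k : ℝ) + μ + 1/2) * qnum q ((n : ℝ) + μ + 1/2)) * hsign
      linarith
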